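/- Let $(d_r)_{r\ge1}$ be a bounded sequence of integers $\ge 2$ and $(p_r)_{r\ge1}$ probabilities in $(0,1]$, and let $\iota_\lambda(r) = (\tilde f_{r-1}(\lambda) - (1-p_r))/p_r$ where $\tilde f_r = f_r\circ\cdots\circ f_1$ with $f_r(z) = ((z-(1-p_r))/p_r)^{d_r}$. If the sequence $(\iota_\lambda(r))_{r\ge1}$ is bounded and $\lim_{r\to\infty} \iota_\lambda(r) = 1$, then there exists $r_0 \ge 1$ such that $\iota_\lambda(r) = 1$ for all $r \ge r_0$. -/

import Mathlib

/-- The polynomial `f_r(z) = ((z - (1 - p_r))/p_r)^(d_r)`. -/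
noncomputable def fr (d : ℕ → ℕ) (p : ℕ → ℝ) (r : ℕ) (z : ℂ) : ℂ :=
  ((z - (1 - (p r : ℂ))) / (p r : ℂ)) ^ (d r)

/-- The composition `f̃_r = f_r ∘ ⋯ ∘ f_1`, with `f̃_0 = id`. -/
noncomputable def ftil (d : ℕ → ℕ) (p : ℕ → ℝ) : ℕ → ℂ → ℂ
  | 0 => fun z => z
  | r + 1 => fun z => fr d p (r + 1) (ftil d p r z)

/-- `ι_λ(r) = (f̃_{r-1}(λ) - (1 - p_r)) / p_r`. -/
noncomputable def iota (d : ℕ → ℕ) (p : ℕ → ℝ) (lam : ℂ) (r : ℕ) : ℂ :=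
  (ftil d p (r - 1) lam - (1 - (p r : ℂ))) / (p r : ℂ)

lemma aux_pow_bound (D : ℕ) (ε : ℝ) (hε1 : ε ≤ 1)
    (hε2 : ε ≤ 1 / (4 * (D + 1) * 2 ^ (D + 1))) (z : ℂ) (hz : ‖z - 1‖ ≤ ε)
    (k : ℕ) (hk : k ≤ D) : ‖z ^ k - 1‖ ≤ 1 / 4 := by
  have hz2 : ‖z‖ ≤ 2 := by
    calc ‖z‖ = ‖z - 1 + 1‖ := by ring_nf
    _ ≤ ‖z - 1‖ + ‖(1 : ℂ)‖ := norm_add_le _ _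
    _ ≤ 2 := by rw [norm_one]; linarith
  have hgeo : z ^ k - 1 = (∑ i ∈ Finset.range k, z ^ i) * (z - 1) := (geom_sum_mul z k).symm
  have hsum : ‖∑ i ∈ Finset.range k, z ^ i‖ ≤ ((D : ℝ) + 1) * 2 ^ (D + 1) := by
    calc ‖∑ i ∈ Finset.range k, z ^ i‖ ≤ ∑ i ∈ Finset.range k, ‖z ^ i‖ := norm_sum_le _ _
    _ ≤ ∑ _i ∈ Finset.range k, (2 : ℝ) ^ (D + 1) := by
        apply Finset.sum_le_sum
        intro i hi
        rw [norm_pow]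
        calc ‖z‖ ^ i ≤ 2 ^ i := pow_le_pow_left₀ (norm_nonneg z) hz2 i
        _ ≤ (2 : ℝ) ^ (D + 1) := by
            apply pow_le_pow_right₀ (by norm_num)
            have := Finset.mem_range.mp hi; omega
    _ = (k : ℝ) * 2 ^ (D + 1) := by simp [Finset.sum_const]
    _ ≤ ((D : ℝ) + 1) * 2 ^ (D + 1) := by
        apply mul_le_mul_of_nonneg_right _ (by positivity)
        exact_mod_cast by omega
  have hε0 : 0 ≤ ε := le_trans (norm_nonneg _) hz
  have key : ‖z ^ k - 1‖ ≤ (((D : ℝ) + 1) * 2 ^ (D + 1)) * (1 / (4 * ((D : ℝ) + 1) * 2 ^ (D + 1))) := by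
    rw [hgeo, norm_mul]
    exact mul_le_mul hsum (le_trans hz hε2) (norm_nonneg _) (by positivity)
  have h4 : (((D : ℝ) + 1) * 2 ^ (D + 1)) * (1 / (4 * ((D : ℝ) + 1) * 2 ^ (D + 1))) = 1 / 4 := by
    have h1 : ((D : ℝ) + 1) ≠ 0 := by positivity
    have h2 : (2 : ℝ) ^ (D + 1) ≠ 0 := by positivity
    field_simp
  linarith [key, h4.le, h4.ge]

lemma aux_grow (D : ℕ) (ε : ℝ) (hε1 : ε ≤ 1)
    (hε2 : ε ≤ 1 / (4 * (D + 1) * 2 ^ (D + 1))) (z : ℂ) (hz : ‖z - 1‖ ≤ ε)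
    (k : ℕ) (hk2 : 2 ≤ k) (hk : k ≤ D) : (3/2 : ℝ) * ‖z - 1‖ ≤ ‖z ^ k - 1‖ := by
  have hgeo : z ^ k - 1 = (∑ i ∈ Finset.range k, z ^ i) * (z - 1) := (geom_sum_mul z k).symm
  have hsplit : (∑ i ∈ Finset.range k, z ^ i) = (k : ℂ) + ∑ i ∈ Finset.range k, (z ^ i - 1) := by
    rw [Finset.sum_sub_distrib]
    simp
  have hsum1 : ‖∑ i ∈ Finset.range k, (z ^ i - 1)‖ ≤ (k : ℝ) * (1/4) := by
    calc ‖∑ i ∈ Finset.range k, (z ^ i - 1)‖ ≤ ∑ i ∈ Finset.range k, ‖z ^ i - 1‖ :=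
          norm_sum_le _ _
    _ ≤ ∑ _i ∈ Finset.range k, (1/4 : ℝ) := by
        apply Finset.sum_le_sum
        intro i hi
        exact aux_pow_bound D ε hε1 hε2 z hz i (le_trans (Nat.le_of_lt_succ (by
          have := Finset.mem_range.mp hi; omega)) hk)
    _ = (k : ℝ) * (1/4) := by simp [Finset.sum_const]
  have hlow : (3/2 : ℝ) ≤ ‖∑ i ∈ Finset.range k, z ^ i‖ := by
    have h1 : (k : ℝ) - (k : ℝ) * (1/4) ≤ ‖∑ i ∈ Finset.range k, z ^ i‖ := by
      rw [hsplit]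
      calc (k : ℝ) - (k : ℝ) * (1/4)
          ≤ ‖(k : ℂ)‖ - ‖∑ i ∈ Finset.range k, (z ^ i - 1)‖ := by
            simp only [Complex.norm_natCast]
            linarith
      _ ≤ ‖(k : ℂ) + ∑ i ∈ Finset.range k, (z ^ i - 1)‖ := by
            have h := norm_add_le ((k : ℂ) + ∑ i ∈ Finset.range k, (z ^ i - 1))
              (-(∑ i ∈ Finset.range k, (z ^ i - 1)))
            simp only [add_neg_cancel_right, norm_neg] at h
            linarith
    have hk2' : (2 : ℝ) ≤ (k : ℝ) := by exact_mod_cast hk2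
    nlinarith
  rw [hgeo, norm_mul]
  nlinarith [norm_nonneg (z - 1), hlow]

lemma ftil_eq (d : ℕ → ℕ) (p : ℕ → ℝ) (lam : ℂ) (r : ℕ) (hr : 1 ≤ r) :
    ftil d p r lam = (iota d p lam r) ^ (d r) := by
  obtain ⟨n, rfl⟩ : ∃ n, r = n + 1 := ⟨r - 1, by omega⟩
  simp [ftil, fr, iota]

lemma iota_rec (d : ℕ → ℕ) (p : ℕ → ℝ) (lam : ℂ) (r : ℕ) (hr : 1 ≤ r)
    (hp : p (r + 1) ≠ 0) :
    iota d p lam (r + 1) - 1 = ((iota d p lam r) ^ (d r) - 1) / (p (r + 1) : ℂ) := by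
  have hp' : ((p (r + 1) : ℂ)) ≠ 0 := by exact_mod_cast hp
  rw [iota, Nat.add_sub_cancel, ftil_eq d p lam r hr]
  field_simp
  ring

/-- If the sequence `(d_r)` is bounded, `(ι_λ(r))_{r ≥ 1}` is bounded and `ι_λ(r) → 1`, then
`ι_λ(r) = 1` for all sufficiently large `r`. -/
theorem stmt9 (d : ℕ → ℕ) (p : ℕ → ℝ)
    (hd : ∀ r, 1 ≤ r → 2 ≤ d r) (hp : ∀ r, 1 ≤ r → 0 < p r ∧ p r ≤ 1)
    (D : ℕ) (hD : ∀ r, 1 ≤ r → d r ≤ D) (lam : ℂ)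
    (hb : ∃ M : ℝ, ∀ r, 1 ≤ r → ‖iota d p lam r‖ ≤ M)
    (hlim : Filter.Tendsto (fun r => iota d p lam r) Filter.atTop (nhds 1)) :
    ∃ r0, 1 ≤ r0 ∧ ∀ r, r0 ≤ r → iota d p lam r = 1 := by
  set ε : ℝ := min 1 (1 / (4 * ((D : ℝ) + 1) * 2 ^ (D + 1))) with hεdef
  have hεpos : 0 < ε := lt_min one_pos (by positivity)
  have hε1 : ε ≤ 1 := min_le_left _ _
  have hε2 : ε ≤ 1 / (4 * ((D : ℝ) + 1) * 2 ^ (D + 1)) := min_le_right _ _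
  obtain ⟨r1, hr1⟩ := (Metric.tendsto_atTop.mp hlim) ε hεpos
  refine ⟨max 1 r1, le_max_left _ _, ?_⟩
  intro r hr
  by_contra hne
  have hbase : 0 < ‖iota d p lam r - 1‖ := by
    rw [norm_pos_iff]; exact sub_ne_zero.mpr hne
  have hsmall : ∀ s, r ≤ s → ‖iota d p lam s - 1‖ ≤ ε := by
    intro s hs
    have := hr1 s (le_trans (le_trans (le_max_right 1 r1) hr) hs)
    rw [dist_eq_norm] at this
    linarith
  have hr1' : 1 ≤ r := le_trans (le_max_left 1 r1) hr
  have grow : ∀ n : ℕ, (3/2 : ℝ) ^ n * ‖iota d p lam r - 1‖ ≤ ‖iota d p lam (r + n) - 1‖ := by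
    intro n
    induction n with
    | zero => simp
    | succ n ih =>
      have hs : 1 ≤ r + n := by omega
      have hps := hp (r + n + 1) (by omega)
      have hrec := iota_rec d p lam (r + n) hs (ne_of_gt hps.1)
      have hgrow := aux_grow D ε hε1 hε2 (iota d p lam (r + n)) (hsmall _ (by omega))
        (d (r + n)) (hd _ hs) (hD _ hs)
      have hnorm : ‖iota d p lam (r + n) ^ (d (r + n)) - 1‖ ≤ ‖iota d p lam (r + n + 1) - 1‖ := by
        rw [hrec, norm_div]
        have hnp : ‖((p (r + n + 1) : ℝ) : ℂ)‖ = p (r + n + 1) := by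
          rw [Complex.norm_real, Real.norm_eq_abs, abs_of_pos hps.1]
        rw [hnp, le_div_iff₀ hps.1]
        nlinarith [norm_nonneg (iota d p lam (r + n) ^ (d (r + n)) - 1)]
      have hnn := norm_nonneg (iota d p lam r - 1)
      have h32 : (0:ℝ) < (3/2 : ℝ) ^ n := by positivity
      calc (3/2 : ℝ) ^ (n + 1) * ‖iota d p lam r - 1‖
          = (3/2 : ℝ) * ((3/2 : ℝ) ^ n * ‖iota d p lam r - 1‖) := by ring
        _ ≤ (3/2 : ℝ) * ‖iota d p lam (r + n) - 1‖ := by nlinarith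
        _ ≤ ‖iota d p lam (r + n) ^ (d (r + n)) - 1‖ := hgrow
        _ ≤ ‖iota d p lam (r + n + 1) - 1‖ := hnorm
        _ = ‖iota d p lam (r + (n + 1)) - 1‖ := by ring_nf
  obtain ⟨n, hn⟩ := pow_unbounded_of_one_lt (ε / ‖iota d p lam r - 1‖)
    (by norm_num : (1:ℝ) < 3/2)
  rw [div_lt_iff₀ hbase] at hn
  have h1 := grow n
  have h2 := hsmall (r + n) (by omega)
  linarith
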